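/- Let t ≤ 1 be a positive real, n ≥ ⌊1/t⌋ + 2, and π = (d_1 ≤ ... ≤ d_n) a graphical sequence. Suppose: (i) for every integer i with ⌊1/t⌋ ≤ i < (n + ⌊1/t⌋ − 1)/2, d_i ≥ i − ⌊1/t⌋ + 2 or d_{n−i+⌊1/t⌋−1} ≥ n−i; and (ii) for every integer i with 1 ≤ i ≤ n/2, d_i ≥ i or d_n ≥ n−i. Then every realization of π is t-tough. -/

import Mathlib

open SimpleGraph

/-- Number of connected components of `G` after deleting the vertex set `X`. -/
noncomputable def delComp {V : Type*} (G : SimpleGraph V) (X : Set V) : ℕ :=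
  Nat.card ((G.induce Xᶜ).ConnectedComponent)

/-- `G` is `t`-tough. -/
def IsTough {V : Type*} [Fintype V] (t : ℝ) (G : SimpleGraph V) : Prop :=
  ∀ X : Finset V, 1 < delComp G ↑X → t * delComp G ↑X ≤ X.card

/-- Degree of a vertex. -/
noncomputable def ndeg {V : Type*} (G : SimpleGraph V) (v : V) : ℕ :=
  Nat.card {u | G.Adj v u}

/-- `G` is a realization of the sequence `d 1, …, d n` (1-based indexing). -/
def Realizes {V : Type*} (n : ℕ) (G : SimpleGraph V) (d : ℕ → ℕ) : Prop :=
  ∃ e : Fin n ≃ V, ∀ i : Fin n, ndeg G (e i) = d (i.1 + 1)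

lemma sum_ncard_supp {W : Type*} [Fintype W] (H : SimpleGraph W)
    [Fintype H.ConnectedComponent] :
    ∑ c : H.ConnectedComponent, Nat.card c.supp = Nat.card W := by
  classical
  rw [Nat.card_eq_fintype_card]
  have h := Finset.card_eq_sum_card_fiberwise (s := (Finset.univ : Finset W))
      (t := (Finset.univ : Finset H.ConnectedComponent))
      (f := H.connectedComponentMk) (fun x _ => Finset.mem_univ _)
  rw [Finset.card_univ] at h
  rw [h]
  refine Finset.sum_congr rfl fun c _ => ?_
  rw [Nat.card_eq_fintype_card]
  exact Fintype.card_of_subtype _ (fun x => by simp [ConnectedComponent.mem_supp_iff])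

lemma degBound {n : ℕ} (G : SimpleGraph (Fin n)) (X : Finset (Fin n))
    {v : Fin n} (hv : v ∈ ((↑X : Set (Fin n))ᶜ)) :
    ndeg G v + 1 ≤ X.card +
      Nat.card ((G.induce (↑X : Set (Fin n))ᶜ).connectedComponentMk ⟨v, hv⟩).supp := by
  classical
  set S : Set (Fin n) := (↑X : Set (Fin n))ᶜ with hS
  set H := G.induce S with hH
  set K := H.connectedComponentMk ⟨v, hv⟩ with hK
  set A : Set (Fin n) := ↑X ∪ Subtype.val '' K.supp with hA
  have hvA : v ∈ A := Or.inr ⟨⟨v, hv⟩, rfl, rfl⟩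
  have hsub : {u | G.Adj v u} ⊆ A \ {v} := by
    intro u hu
    refine ⟨?_, (hu : G.Adj v u).ne'⟩
    by_cases hx : u ∈ X
    · exact Or.inl hx
    · have hu' : u ∈ S := hx
      have hadj : H.Adj ⟨v, hv⟩ ⟨u, hu'⟩ := hu
      refine Or.inr ⟨⟨u, hu'⟩, ?_, rfl⟩
      have : H.connectedComponentMk ⟨u, hu'⟩ = K := (ConnectedComponent.sound hadj.reachable).symm
      simp [ConnectedComponent.mem_supp_iff, this]
  have hfin : A.Finite := Set.toFinite _
  have h1 : ({u | G.Adj v u} : Set (Fin n)).ncard ≤ (A \ {v}).ncard :=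
    Set.ncard_le_ncard hsub (hfin.subset Set.diff_subset)
  have h2 : (A \ {v}).ncard + 1 = A.ncard := Set.ncard_diff_singleton_add_one hvA hfin
  have h3 : A.ncard ≤ (↑X : Set (Fin n)).ncard + (Subtype.val '' K.supp).ncard :=
    Set.ncard_union_le _ _
  have h4 : (Subtype.val '' K.supp).ncard = K.supp.ncard :=
    Set.ncard_image_of_injective _ Subtype.val_injective
  have h5 : (↑X : Set (Fin n)).ncard = X.card := Set.ncard_coe_finset X
  have h6 : Nat.card K.supp = K.supp.ncard := Nat.card_coe_set_eq _
  have h7 : ndeg G v = ({u | G.Adj v u} : Set (Fin n)).ncard := Nat.card_coe_set_eq _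
  omega

lemma sortedBound {n : ℕ} {G : SimpleGraph (Fin n)} {d : ℕ → ℕ}
    (hmono : ∀ i j : ℕ, 1 ≤ i → i ≤ j → j ≤ n → d i ≤ d j)
    (e : Fin n ≃ Fin n) (he : ∀ i : Fin n, ndeg G (e i) = d (i.1 + 1))
    {p D : ℕ} (hp1 : 1 ≤ p) (T : Finset (Fin n)) (hT : p ≤ T.card)
    (hdeg : ∀ v ∈ T, ndeg G v ≤ D) : d p ≤ D := by
  classical
  by_contra h
  push_neg at h
  have key : ∀ v ∈ T, (e.symm v).1 + 1 < p := by
    intro v hv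
    by_contra hge
    push_neg at hge
    have h1 : d p ≤ d ((e.symm v).1 + 1) :=
      hmono _ _ hp1 hge (Nat.succ_le_of_lt (e.symm v).isLt)
    have h2 : ndeg G v = d ((e.symm v).1 + 1) := by
      have := he (e.symm v); simpa using this
    have := hdeg v hv
    omega
  have himg : T.image (fun v => (e.symm v).1) ⊆ Finset.range (p - 1) := by
    intro x hx
    simp only [Finset.mem_image] at hx
    obtain ⟨w, hw, rfl⟩ := hx
    have := key w hw
    simp only [Finset.mem_range]
    omega
  have hinj : Set.InjOn (fun v => (e.symm v).1) T :=
    fun a _ b _ hab => e.symm.injective (Fin.val_injective hab)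
  have hle := Finset.card_le_card himg
  rw [Finset.card_image_of_injOn hinj, Finset.card_range] at hle
  omega

theorem stmt15 (t : ℝ) (ht0 : 0 < t) (ht1 : t ≤ 1) (n : ℕ)
    (hn : ⌊1 / t⌋₊ + 2 ≤ n)
    (d : ℕ → ℕ)
    (hmono : ∀ i j : ℕ, 1 ≤ i → i ≤ j → j ≤ n → d i ≤ d j)
    (hgraph : ∃ G : SimpleGraph (Fin n), Realizes n G d)
    (hi : ∀ i : ℕ, ⌊1 / t⌋₊ ≤ i → 2 * i < n + ⌊1 / t⌋₊ - 1 →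
      i - ⌊1 / t⌋₊ + 2 ≤ d i ∨ n - i ≤ d (n - i + ⌊1 / t⌋₊ - 1))
    (hii : ∀ i : ℕ, 1 ≤ i → 2 * i ≤ n → i ≤ d i ∨ n - i ≤ d n) :
    ∀ G : SimpleGraph (Fin n), Realizes n G d → IsTough t G := by
  classical
  clear hgraph
  intro G hG X hω
  obtain ⟨e, he⟩ := hG
  set k := ⌊1 / t⌋₊ with hkdef
  have hk1 : 1 ≤ k := Nat.le_floor (by
    rw [Nat.cast_one]
    exact one_le_one_div ht0 ht1)
  set m := X.card with hmdef
  set S : Set (Fin n) := (↑X : Set (Fin n))ᶜ with hS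
  set H := G.induce S with hH
  haveI : Fintype H.ConnectedComponent := Fintype.ofFinite _
  set ω := delComp G ↑X with hωdef
  have hωcard : ω = Fintype.card H.ConnectedComponent := Nat.card_eq_fintype_card
  -- reduce to the combinatorial statement ω ≤ k * m
  suffices hsuff : ω ≤ k * m by
    have hk' : (k : ℝ) ≤ 1 / t := Nat.floor_le (by positivity)
    have h1 : t * k ≤ 1 := by
      calc t * k ≤ t * (1 / t) := by gcongr
        _ = 1 := by field_simp
    have hcast : (ω : ℝ) ≤ (k : ℝ) * (m : ℝ) := by exact_mod_cast hsuff
    calc t * ω ≤ t * ((k : ℝ) * m) := by gcongr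
      _ = (t * k) * m := by ring
      _ ≤ 1 * m := by
          apply mul_le_mul_of_nonneg_right h1 (by positivity)
      _ = m := one_mul _
  by_contra hcon
  push_neg at hcon
  -- component sizes
  set sz : H.ConnectedComponent → ℕ := fun c => Nat.card c.supp with hszdef
  set N := Nat.card ↥S with hNdef
  have hsum : ∑ c : H.ConnectedComponent, sz c = N := sum_ncard_supp H
  have hN : N = n - m := by
    rw [hNdef, hS, ← Finset.coe_compl, Nat.card_coe_set_eq, Set.ncard_coe_finset,
      Finset.card_compl, Fintype.card_fin]
  have hmn : m ≤ n := le_trans (Finset.card_le_univ X) (by simp)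
  have hNn : N + m = n := by omega
  have hsz1 : ∀ c : H.ConnectedComponent, 1 ≤ sz c := by
    intro c
    obtain ⟨v, hv⟩ := c.exists_rep
    haveI : Nonempty c.supp := ⟨⟨v, hv⟩⟩
    exact Nat.card_pos
  have hcount : (Finset.univ : Finset H.ConnectedComponent).card = ω := by
    rw [Finset.card_univ, hωcard]
  have hdb : ∀ (v : Fin n) (hv : v ∈ S),
      ndeg G v + 1 ≤ m + sz (H.connectedComponentMk ⟨v, hv⟩) := by
    intro v hv
    exact degBound G X hv
  have huniv_ne : (Finset.univ : Finset H.ConnectedComponent).Nonempty := by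
    rw [← Finset.card_pos, hcount]; omega
  -- helper: pairwise sum bound
  have hpair : ∀ c c' : H.ConnectedComponent, c ≠ c' → sz c + sz c' ≤ N := by
    intro c c' hne
    have hsub : ({c, c'} : Finset H.ConnectedComponent) ⊆ Finset.univ :=
      Finset.subset_univ _
    have := Finset.sum_le_sum_of_subset (f := sz) hsub
    rw [Finset.sum_pair hne, hsum] at this
    exact this
  rcases Nat.eq_zero_or_pos m with hm0 | hm1
  · -- X is empty; use condition (ii)
    have hX0 : X = ∅ := Finset.card_eq_zero.mp hm0
    obtain ⟨K0, _, hK0min⟩ := Finset.exists_min_image Finset.univ sz huniv_ne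
    obtain ⟨K1, -, K2, -, hK12⟩ := Finset.one_lt_card.mp (by omega : 1 < (Finset.univ : Finset H.ConnectedComponent).card)
    have hother : ∃ K' , K' ≠ K0 := by
      rcases eq_or_ne K1 K0 with rfl | h
      · exact ⟨K2, fun h' => hK12 h'.symm⟩
      · exact ⟨K1, h⟩
    obtain ⟨K1', hK1'⟩ := hother
    set c1 := sz K0 with hc1def
    have hc1pos : 1 ≤ c1 := hsz1 K0
    have h2c1 : 2 * c1 ≤ N := by
      have h := hpair K1' K0 hK1'
      have := hK0min K1' (Finset.mem_univ _)
      omega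
    -- all vertices of K0 have degree ≤ c1 - 1
    set TA := (Subtype.val '' K0.supp).toFinset with hTAdef
    have hTAcard : TA.card = c1 := by
      rw [hTAdef, ← Set.ncard_eq_toFinset_card', Set.ncard_image_of_injective _ Subtype.val_injective,
        ← Nat.card_coe_set_eq]
    have hdA : d c1 ≤ c1 - 1 := by
      refine sortedBound hmono e he hc1pos TA (by omega) ?_
      intro v hvT
      rw [hTAdef, Set.mem_toFinset] at hvT
      obtain ⟨u, hu, rfl⟩ := hvT
      have hb := hdb u.1 u.2
      have : H.connectedComponentMk ⟨u.1, u.2⟩ = K0 := by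
        rw [ConnectedComponent.mem_supp_iff] at hu
        simpa using hu
      rw [this] at hb
      omega
    -- all vertices have degree ≤ n - c1 - 1
    have hdn : d n ≤ n - c1 - 1 := by
      refine sortedBound hmono e he (by omega) Finset.univ (by simp) ?_
      intro v _
      have hv : v ∈ S := by simp [hS, hX0]
      have hb := hdb v hv
      set c := H.connectedComponentMk ⟨v, hv⟩ with hcdef
      have hcle : sz c ≤ N - c1 := by
        rcases eq_or_ne c K0 with hceq | hcne
        · rw [hceq]; omega
        · have := hpair c K0 hcne
          omega
      omega
    have := hii c1 hc1pos (by omega)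
    clear_value sz N ω c1
    omega
  · -- main case: m ≥ 1, use condition (i)
    have hkm : k + m ≤ ω := by nlinarith
    obtain ⟨Ks, -, hKsmax⟩ := Finset.exists_max_image Finset.univ sz huniv_ne
    have hEne : ((Finset.univ : Finset H.ConnectedComponent).erase Ks).Nonempty := by
      rw [← Finset.card_pos, Finset.card_erase_of_mem (Finset.mem_univ _), hcount]
      omega
    obtain ⟨Kp, hKpE, hKpmax⟩ := Finset.exists_max_image _ sz hEne
    set cs := sz Ks with hcsdef
    set cp := sz Kp with hcpdef
    have hcppos : 1 ≤ cp := hsz1 Kp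
    have hcple : cp ≤ cs := hKsmax Kp (Finset.mem_univ _)
    -- sum bound: cs + cp + (ω - 2) ≤ N
    have hsumbound : cs + cp + (ω - 2) ≤ N := by
      have h1 : sz Ks + ∑ c ∈ Finset.univ.erase Ks, sz c = ∑ c : H.ConnectedComponent, sz c :=
        Finset.add_sum_erase _ sz (Finset.mem_univ _)
      have h2 : sz Kp + ∑ c ∈ (Finset.univ.erase Ks).erase Kp, sz c
          = ∑ c ∈ Finset.univ.erase Ks, sz c :=
        Finset.add_sum_erase _ sz hKpE
      have h3 : ((Finset.univ.erase Ks).erase Kp).card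
          ≤ ∑ c ∈ (Finset.univ.erase Ks).erase Kp, sz c := by
        rw [Finset.card_eq_sum_ones]
        exact Finset.sum_le_sum (fun c _ => hsz1 c)
      have h4 : ((Finset.univ.erase Ks).erase Kp).card = ω - 2 := by
        rw [Finset.card_erase_of_mem hKpE, Finset.card_erase_of_mem (Finset.mem_univ _), hcount]
        omega
      omega
    clear_value sz N ω cs cp
    set i := m + cp + k - 2 with hidef
    clear_value i
    set j := n - i + k - 1 with hjdef
    clear_value j
    -- TA : vertices outside X and outside Ks
    set TA := S.toFinset \ (Subtype.val '' Ks.supp).toFinset with hTAdef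
    have hScard : S.toFinset.card = N := by
      rw [← Set.ncard_eq_toFinset_card', ← Nat.card_coe_set_eq]
      exact hNdef.symm
    have hKsF : (Subtype.val '' Ks.supp).toFinset ⊆ S.toFinset := by
      intro x hx
      rw [Set.mem_toFinset] at hx ⊢
      obtain ⟨u, _, rfl⟩ := hx
      exact u.2
    have hKsFcard : (Subtype.val '' Ks.supp).toFinset.card = cs := by
      rw [← Set.ncard_eq_toFinset_card', Set.ncard_image_of_injective _ Subtype.val_injective,
        ← Nat.card_coe_set_eq, hcsdef, hszdef]
    have hTAcard : TA.card = N - cs := by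
      rw [hTAdef, Finset.card_sdiff_of_subset hKsF, hScard, hKsFcard]
    have hA : d i ≤ m + cp - 1 := by
      refine sortedBound hmono e he (by omega) TA (by omega) ?_
      intro v hvT
      rw [hTAdef, Finset.mem_sdiff, Set.mem_toFinset, Set.mem_toFinset] at hvT
      obtain ⟨hv, hvKs⟩ := hvT
      have hb := hdb v hv
      set c := H.connectedComponentMk ⟨v, hv⟩ with hcdef
      have hcne : c ≠ Ks := by
        intro hceq
        exact hvKs ⟨⟨v, hv⟩, by simp [ConnectedComponent.mem_supp_iff, ← hcdef, hceq], rfl⟩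
      have : sz c ≤ cp := hKpmax c (Finset.mem_erase.mpr ⟨hcne, Finset.mem_univ _⟩)
      omega
    have hB : d j ≤ m + cs - 1 := by
      refine sortedBound hmono e he (by omega) S.toFinset (by omega) ?_
      intro v hvT
      rw [Set.mem_toFinset] at hvT
      have hb := hdb v hvT
      have : sz (H.connectedComponentMk ⟨v, hvT⟩) ≤ cs := hKsmax _ (Finset.mem_univ _)
      omega
    have hrange1 : k ≤ i := by omega
    have hrange2 : 2 * i < n + k - 1 := by omega
    have := hi i hrange1 hrange2
    rw [hjdef] at hB
    omega
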